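/- arXiv:2407.05661 — 2 statements merged into one kernel-verified Lean document; each statement's English description precedes it below -/
import Mathlib

section
/- Let r > 0, T > 0, λ ∈ ℝ and set ϖ = 1/(r²(1+r²)). Then there exists a C² function u : ℝ² → ℝ with u(t,θ+2π) = u(t,θ) for all (t,θ), not identically zero on [0,T]×ℝ, satisfying (1/(1+r²))∂²u/∂t² + (1/r²)∂²u/∂θ² + (ϖ + λ)u = 0 at every point of [0,T]×ℝ and the Robin conditions ∂u/∂t(0,θ) + u(0,θ) = 0 and ∂u/∂t(T,θ) + u(T,θ) = 0 for all θ, if and only if λ belongs to the set {(n² − 1)/r² : n ∈ ℕ, n ≥ 0} ∪ {m²π²/((1+r²)T²) + (n²(1+r²) − 1)/(r²(1+r²)) : m,n ∈ ℕ, m ≥ 1, n ≥ 0}. -/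
open Real MeasureTheory Set intervalIntegral

/-- Differentiation under the interval integral. -/
lemma deriv_under_integral (u u' : ℝ → ℝ → ℝ) (w : ℝ → ℝ)
    (hu : Continuous (Function.uncurry u)) (hu' : Continuous (Function.uncurry u'))
    (hw : Continuous w)
    (hd : ∀ x θ : ℝ, HasDerivAt (fun s => u s θ) (u' x θ) x) (x : ℝ) :
    HasDerivAt (fun s => ∫ θ in (0:ℝ)..2*π, u s θ * w θ)
      (∫ θ in (0:ℝ)..2*π, u' x θ * w θ) x := by
  have hK : IsCompact ((Icc (x-1) (x+1)) ×ˢ (uIcc (0:ℝ) (2*π))) :=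
    isCompact_Icc.prod isCompact_uIcc
  obtain ⟨C, hC⟩ := hK.exists_bound_of_continuousOn
    (hu'.continuousOn (s := (Icc (x-1) (x+1)) ×ˢ (uIcc (0:ℝ) (2*π))))
  obtain ⟨D, hD⟩ := (isCompact_uIcc (a := (0:ℝ)) (b := 2*π)).exists_bound_of_continuousOn
    hw.continuousOn
  refine (intervalIntegral.hasDerivAt_integral_of_dominated_loc_of_deriv_le (F := fun s θ => u s θ * w θ)
    (F' := fun s θ => u' s θ * w θ) (bound := fun _ => C * D) (μ := volume) (s := Metric.ball x 1) (Metric.ball_mem_nhds x one_pos) ?_ ?_ ?_ ?_ ?_ ?_).2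
  · filter_upwards with s
    exact ((hu.comp (by fun_prop : Continuous fun θ : ℝ => (s, θ))).mul hw).aestronglyMeasurable
  · exact ((hu.comp (by fun_prop : Continuous fun θ : ℝ => (x, θ))).mul hw).intervalIntegrable _ _
  · exact ((hu'.comp (by fun_prop : Continuous fun θ : ℝ => (x, θ))).mul hw).aestronglyMeasurable
  · refine Filter.Eventually.of_forall ?_
    intro θ hθ s hs
    have h1 : ‖u' s θ‖ ≤ C := by
      have hs' : s ∈ Icc (x-1) (x+1) := by
        have := Metric.mem_ball.mp hs
        rw [Real.dist_eq] at this
        have := abs_le.mp this.le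
        constructor <;> linarith [this.1, this.2]
      have := hC (s, θ) ⟨hs', uIoc_subset_uIcc hθ⟩
      simpa [Function.uncurry] using this
    have h2 : ‖w θ‖ ≤ D := hD θ (uIoc_subset_uIcc hθ)
    calc ‖u' s θ * w θ‖ = ‖u' s θ‖ * ‖w θ‖ := norm_mul _ _
      _ ≤ C * D := by
          have h0 : (0:ℝ) ≤ ‖u' s θ‖ := norm_nonneg _
          exact mul_le_mul h1 h2 (norm_nonneg _) (le_trans h0 h1)
  · exact intervalIntegrable_const
  · refine Filter.Eventually.of_forall ?_
    intro θ _ s _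
    exact (hd s θ).mul_const _


lemma ode_repr (T c : ℝ) (v v' : ℝ → ℝ)
    (hv : ∀ t, HasDerivAt v (v' t) t)
    (hv' : ∀ t ∈ Icc 0 T, HasDerivAt v' (c * v t) t)
    (f₁ f₂ f₁' f₂' : ℝ → ℝ)
    (h₁ : ∀ t, HasDerivAt f₁ (f₁' t) t) (h₁' : ∀ t, HasDerivAt f₁' (c * f₁ t) t)
    (h₂ : ∀ t, HasDerivAt f₂ (f₂' t) t) (h₂' : ∀ t, HasDerivAt f₂' (c * f₂ t) t)
    (hW : ∀ t, f₁ t * f₂' t - f₁' t * f₂ t = 1) :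
    ∀ t ∈ Icc 0 T,
      v t = (v 0 * f₂' 0 - v' 0 * f₂ 0) * f₁ t + (v' 0 * f₁ 0 - v 0 * f₁' 0) * f₂ t ∧
      v' t = (v 0 * f₂' 0 - v' 0 * f₂ 0) * f₁' t + (v' 0 * f₁ 0 - v 0 * f₁' 0) * f₂' t := by
  have hvcont : Continuous v := by
    have : Differentiable ℝ v := fun t => (hv t).differentiableAt
    exact this.continuous
  have hv'cont : ContinuousOn v' (Icc 0 T) := fun t ht =>
    ((hv' t ht).continuousAt).continuousWithinAt
  -- the two "constants of motion"
  set a : ℝ → ℝ := fun t => v t * f₂' t - v' t * f₂ t with ha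
  set b : ℝ → ℝ := fun t => v' t * f₁ t - v t * f₁' t with hb
  have hacont : ContinuousOn a (Icc 0 T) :=
    ((hvcont.continuousOn.mul (fun t _ => ((h₂' t).continuousAt).continuousWithinAt)).sub
      (hv'cont.mul (fun t _ => ((h₂ t).continuousAt).continuousWithinAt)))
  have hbcont : ContinuousOn b (Icc 0 T) :=
    ((hv'cont.mul (fun t _ => ((h₁ t).continuousAt).continuousWithinAt)).sub
      (hvcont.continuousOn.mul (fun t _ => ((h₁' t).continuousAt).continuousWithinAt)))
  have hconst : ∀ g ∈ ({a, b} : Set (ℝ → ℝ)), True := fun _ _ => trivial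
  have haeq : ∀ t ∈ Icc 0 T, a t = a 0 := by
    apply constant_of_has_deriv_right_zero hacont
    intro t ht
    have ht' : t ∈ Icc 0 T := Ico_subset_Icc_self ht
    have : HasDerivAt a (v' t * f₂' t + v t * (c * f₂ t)
        - ((c * v t) * f₂ t + v' t * f₂' t)) t :=
      ((hv t).mul (h₂' t)).sub ((hv' t ht').mul (h₂ t))
    have h0 : v' t * f₂' t + v t * (c * f₂ t) - ((c * v t) * f₂ t + v' t * f₂' t) = 0 := by ring
    rw [h0] at this
    exact this.hasDerivWithinAt
  have hbeq : ∀ t ∈ Icc 0 T, b t = b 0 := by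
    apply constant_of_has_deriv_right_zero hbcont
    intro t ht
    have ht' : t ∈ Icc 0 T := Ico_subset_Icc_self ht
    have : HasDerivAt b ((c * v t) * f₁ t + v' t * f₁' t
        - (v' t * f₁' t + v t * (c * f₁ t))) t :=
      ((hv' t ht').mul (h₁ t)).sub ((hv t).mul (h₁' t))
    have h0 : (c * v t) * f₁ t + v' t * f₁' t - (v' t * f₁' t + v t * (c * f₁ t)) = 0 := by ring
    rw [h0] at this
    exact this.hasDerivWithinAt
  intro t ht
  have ha0 := haeq t ht
  have hb0 := hbeq t ht
  simp only [ha, hb] at ha0 hb0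
  have hw := hW t
  constructor
  · have : v t * (f₁ t * f₂' t - f₁' t * f₂ t) =
        (v 0 * f₂' 0 - v' 0 * f₂ 0) * f₁ t + (v' 0 * f₁ 0 - v 0 * f₁' 0) * f₂ t := by
      linear_combination (f₁ t) * ha0 + (f₂ t) * hb0
    rw [hw] at this; linarith [this]
  · have : v' t * (f₁ t * f₂' t - f₁' t * f₂ t) =
        (v 0 * f₂' 0 - v' 0 * f₂ 0) * f₁' t + (v' 0 * f₁ 0 - v 0 * f₁' 0) * f₂' t := by
      linear_combination (f₁' t) * ha0 + (f₂' t) * hb0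
    rw [hw] at this; linarith [this]

lemma robin_classify (T c : ℝ) (hT : 0 < T) (v v' : ℝ → ℝ)
    (hv : ∀ t, HasDerivAt v (v' t) t)
    (hv' : ∀ t ∈ Icc 0 T, HasDerivAt v' (c * v t) t)
    (h0 : v' 0 + v 0 = 0) (hTb : v' T + v T = 0)
    (hne : ∃ t ∈ Icc 0 T, v t ≠ 0) :
    c = 1 ∨ ∃ m : ℕ, 1 ≤ m ∧ c = -((m:ℝ)^2 * π^2 / T^2) := by
  have hTmem : T ∈ Icc (0:ℝ) T := ⟨hT.le, le_refl T⟩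
  rcases lt_trichotomy c 0 with hc | hc | hc
  · -- c < 0 : trigonometric case
    set μ := Real.sqrt (-c) with hμ
    have hμpos : 0 < μ := Real.sqrt_pos.2 (by linarith)
    have hμsq : μ ^ 2 = -c := Real.sq_sqrt (by linarith)
    have h₁ : ∀ t, HasDerivAt (fun t => Real.cos (μ * t)) (-μ * Real.sin (μ * t)) t := by
      intro t
      have := ((hasDerivAt_id t).const_mul μ).cos
      simpa [mul_comm] using this
    have hc' : c = -(μ^2) := by linarith [hμsq]
    have h₁' : ∀ t, HasDerivAt (fun t => -μ * Real.sin (μ * t)) (c * Real.cos (μ * t)) t := by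
      intro t
      have h := (((hasDerivAt_id t).const_mul μ).sin).const_mul (-μ)
      refine h.congr_deriv (Eq.symm ?_)
      simp only [id]
      rw [hc']; ring
    have h₂ : ∀ t, HasDerivAt (fun t => Real.sin (μ * t) / μ) (Real.cos (μ * t)) t := by
      intro t
      have h := (((hasDerivAt_id t).const_mul μ).sin).div_const μ
      refine h.congr_deriv (Eq.symm ?_)
      simp only [id]
      field_simp
    have h₂' : ∀ t, HasDerivAt (fun t => Real.cos (μ * t)) (c * (Real.sin (μ * t) / μ)) t := by
      intro t
      have h := ((hasDerivAt_id t).const_mul μ).cos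
      refine h.congr_deriv (Eq.symm ?_)
      simp only [id]
      rw [hc']
      field_simp [hμpos.ne']
    have hW : ∀ t, Real.cos (μ * t) * Real.cos (μ * t)
        - (-μ * Real.sin (μ * t)) * (Real.sin (μ * t) / μ) = 1 := by
      intro t
      have := Real.sin_sq_add_cos_sq (μ * t)
      field_simp
      nlinarith [this]
    have hrep := ode_repr T c v v' hv hv' _ _ _ _ h₁ h₁' h₂ h₂' hW
    have e0c : Real.cos (μ * 0) = 1 := by simp
    have e0s : Real.sin (μ * 0) = 0 := by simp
    have hv0 : v 0 ≠ 0 := by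
      intro hz
      have hvz : v' 0 = 0 := by linarith
      rcases hne with ⟨t, ht, hvt⟩
      have := (hrep t ht).1
      rw [hz, hvz] at this
      simp at this
      exact hvt this
    have hvT := (hrep T hTmem).1
    have hv'T := (hrep T hTmem).2
    rw [e0c, e0s] at hvT hv'T
    simp only [mul_zero, zero_div, mul_one, mul_zero] at hvT hv'T
    -- v 0 * ... ; v' 0 = - v 0
    have hv'0 : v' 0 = -v 0 := by linarith
    rw [hv'0] at hvT hv'T
    -- hvT : v T = v 0 * cos(μT) + (-v 0) * (sin(μT)/μ)
    -- hv'T : v' T = v 0 * (-μ sin(μT)) + (-v 0)*cos(μT)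
    have key : v 0 * (Real.sin (μ * T) * (μ + 1/μ)) = 0 := by
      have h := hTb
      rw [hvT, hv'T] at h
      field_simp at h ⊢
      linarith [h]
    have hsin : Real.sin (μ * T) = 0 := by
      have hfac : μ + 1/μ > 0 := by positivity
      rcases mul_eq_zero.mp key with h | h
      · exact absurd h hv0
      rcases mul_eq_zero.mp h with h | h
      · exact h
      · linarith
    rw [Real.sin_eq_zero_iff] at hsin
    obtain ⟨k, hk⟩ := hsin
    have hkpos : 0 < k := by
      have : (0:ℝ) < k * π := by rw [hk]; positivity
      by_contra hkn
      push_neg at hkn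
      have : (k:ℝ) ≤ 0 := by exact_mod_cast hkn
      nlinarith [Real.pi_pos]
    refine Or.inr ⟨k.toNat, ?_, ?_⟩
    · omega
    · have hkk : ((k.toNat : ℕ) : ℝ) = (k : ℝ) := by
        exact_mod_cast Int.toNat_of_nonneg hkpos.le
      have hμT : μ = (k:ℝ) * π / T := by
        field_simp at hk ⊢
        linarith [hk]
      have : c = -(μ^2) := by linarith [hμsq]
      rw [this, hμT, hkk]
      field_simp
  · -- c = 0
    subst hc
    have h₁ : ∀ t, HasDerivAt (fun _ : ℝ => (1:ℝ)) ((fun _ : ℝ => (0:ℝ)) t) t :=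
      fun t => hasDerivAt_const t 1
    have h₁' : ∀ t, HasDerivAt (fun _ : ℝ => (0:ℝ)) ((0:ℝ) * (1:ℝ)) t := by
      intro t; simpa using hasDerivAt_const t (0:ℝ)
    have h₂ : ∀ t : ℝ, HasDerivAt (fun t : ℝ => t) ((fun _ : ℝ => (1:ℝ)) t) t :=
      fun t => hasDerivAt_id t
    have h₂' : ∀ t : ℝ, HasDerivAt (fun _ : ℝ => (1:ℝ)) ((0:ℝ) * t) t := by
      intro t; simpa using hasDerivAt_const t (1:ℝ)
    have hW : ∀ t : ℝ, (1:ℝ) * 1 - 0 * t = 1 := by intro t; ring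
    have hrep := ode_repr T 0 v v' hv hv'
      (fun _ => (1:ℝ)) (fun t => t) (fun _ => (0:ℝ)) (fun _ => (1:ℝ))
      h₁ (by intro t; simpa using hasDerivAt_const t (0:ℝ)) h₂
      (by intro t; simpa using hasDerivAt_const t (1:ℝ)) hW
    have hvT := (hrep T hTmem).1
    have hv'T := (hrep T hTmem).2
    simp only [mul_one, mul_zero, sub_zero, zero_sub] at hvT hv'T
    -- v T = v 0 + v' 0 * T, v' T = v' 0
    have hv0 : v 0 = 0 := by nlinarith [hvT, hv'T, h0, hTb, hT]
    have hv'0 : v' 0 = 0 := by linarith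
    rcases hne with ⟨t, ht, hvt⟩
    have := (hrep t ht).1
    rw [hv0, hv'0] at this
    simp at this
    exact absurd this hvt
  · -- c > 0 : hyperbolic case
    set μ := Real.sqrt c with hμ
    have hμpos : 0 < μ := Real.sqrt_pos.2 hc
    have hμsq : μ ^ 2 = c := Real.sq_sqrt hc.le
    have h₁ : ∀ t, HasDerivAt (fun t => Real.cosh (μ * t)) (μ * Real.sinh (μ * t)) t := by
      intro t
      have := ((hasDerivAt_id t).const_mul μ).cosh
      simpa [mul_comm] using this
    have hc' : c = μ^2 := hμsq.symm
    have h₁' : ∀ t, HasDerivAt (fun t => μ * Real.sinh (μ * t)) (c * Real.cosh (μ * t)) t := by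
      intro t
      have h := (((hasDerivAt_id t).const_mul μ).sinh).const_mul μ
      refine h.congr_deriv (Eq.symm ?_)
      simp only [id]
      rw [hc']; ring
    have h₂ : ∀ t, HasDerivAt (fun t => Real.sinh (μ * t) / μ) (Real.cosh (μ * t)) t := by
      intro t
      have h := (((hasDerivAt_id t).const_mul μ).sinh).div_const μ
      refine h.congr_deriv (Eq.symm ?_)
      simp only [id]
      field_simp
    have h₂' : ∀ t, HasDerivAt (fun t => Real.cosh (μ * t)) (c * (Real.sinh (μ * t) / μ)) t := by
      intro t
      have h := ((hasDerivAt_id t).const_mul μ).cosh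
      refine h.congr_deriv (Eq.symm ?_)
      simp only [id]
      rw [hc']
      field_simp [hμpos.ne']
    have hW : ∀ t, Real.cosh (μ * t) * Real.cosh (μ * t)
        - (μ * Real.sinh (μ * t)) * (Real.sinh (μ * t) / μ) = 1 := by
      intro t
      have := Real.cosh_sq_sub_sinh_sq (μ * t)
      field_simp
      nlinarith [this]
    have hrep := ode_repr T c v v' hv hv' _ _ _ _ h₁ h₁' h₂ h₂' hW
    have hv0 : v 0 ≠ 0 := by
      intro hz
      have hvz : v' 0 = 0 := by linarith
      rcases hne with ⟨t, ht, hvt⟩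
      have := (hrep t ht).1
      rw [hz, hvz] at this
      simp at this
      exact hvt this
    have hvT := (hrep T hTmem).1
    have hv'T := (hrep T hTmem).2
    simp only [mul_zero, Real.cosh_zero, Real.sinh_zero, zero_div, mul_one] at hvT hv'T
    have hv'0 : v' 0 = -v 0 := by linarith
    rw [hv'0] at hvT hv'T
    have key : v 0 * (Real.sinh (μ * T) * (μ - 1/μ)) = 0 := by
      have h := hTb
      rw [hvT, hv'T] at h
      field_simp at h ⊢
      linarith [h]
    have hsinh : Real.sinh (μ * T) > 0 := by
      have : μ * T > 0 := by positivity
      exact Real.sinh_pos_iff.mpr this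
    have hfac : μ - 1/μ = 0 := by
      rcases mul_eq_zero.mp key with h | h
      · exact absurd h hv0
      rcases mul_eq_zero.mp h with h | h
      · linarith
      · exact h
    have hμ1 : μ = 1 := by
      have : μ * μ = 1 := by
        field_simp at hfac
        nlinarith [hfac]
      nlinarith [hμpos]
    left
    rw [← hμsq, hμ1]; norm_num


lemma parts_cos (g g' g'' : ℝ → ℝ) (n : ℕ)
    (hg : ∀ θ, HasDerivAt g (g' θ) θ) (hg' : ∀ θ, HasDerivAt g' (g'' θ) θ)
    (hcg : Continuous g) (hcg'' : Continuous g'')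
    (hper : g (2*π) = g 0) (hper' : g' (2*π) = g' 0) :
    ∫ θ in (0:ℝ)..2*π, g'' θ * Real.cos ((n:ℝ)*θ)
      = -(n:ℝ)^2 * ∫ θ in (0:ℝ)..2*π, g θ * Real.cos ((n:ℝ)*θ) := by
  set H : ℝ → ℝ := fun θ => g' θ * Real.cos ((n:ℝ)*θ) + (n:ℝ) * (g θ * Real.sin ((n:ℝ)*θ)) with hH
  have hder : ∀ θ : ℝ, HasDerivAt H
      (g'' θ * Real.cos ((n:ℝ)*θ) + (n:ℝ)^2 * (g θ * Real.cos ((n:ℝ)*θ))) θ := by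
    intro θ
    have hcosd : HasDerivAt (fun θ : ℝ => Real.cos ((n:ℝ)*θ)) (-Real.sin ((n:ℝ)*θ) * ((n:ℝ)*1)) θ :=
      ((hasDerivAt_id θ).const_mul (n:ℝ)).cos
    have hsind : HasDerivAt (fun θ : ℝ => Real.sin ((n:ℝ)*θ)) (Real.cos ((n:ℝ)*θ) * ((n:ℝ)*1)) θ :=
      ((hasDerivAt_id θ).const_mul (n:ℝ)).sin
    have h := ((hg' θ).mul hcosd).add (((hg θ).mul hsind).const_mul (n:ℝ))
    refine h.congr_deriv (Eq.symm ?_)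
    ring
  have hcont : Continuous fun θ : ℝ => g'' θ * Real.cos ((n:ℝ)*θ)
      + (n:ℝ)^2 * (g θ * Real.cos ((n:ℝ)*θ)) := by
    fun_prop
  have hint := intervalIntegral.integral_eq_sub_of_hasDerivAt
    (f := H) (a := (0:ℝ)) (b := 2*π)
    (fun θ _ => hder θ) (hcont.intervalIntegrable _ _)
  have hbd : H (2*π) - H 0 = 0 := by
    simp only [hH]
    have c1 : Real.cos ((n:ℝ)*(2*π)) = 1 := Real.cos_nat_mul_two_pi n
    have s1 : Real.sin ((n:ℝ)*(2*π)) = 0 := by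
      have := Real.sin_add_nat_mul_two_pi 0 n
      simpa using this
    rw [c1, s1, hper, hper']
    simp
  rw [hbd] at hint
  have I1 : IntervalIntegrable (fun θ => g'' θ * Real.cos ((n:ℝ)*θ)) volume 0 (2*π) :=
    (hcg''.mul (by fun_prop)).intervalIntegrable _ _
  have I2 : IntervalIntegrable (fun θ => (n:ℝ)^2 * (g θ * Real.cos ((n:ℝ)*θ))) volume 0 (2*π) :=
    (continuous_const.mul (hcg.mul (by fun_prop))).intervalIntegrable _ _
  rw [intervalIntegral.integral_add I1 I2, intervalIntegral.integral_const_mul] at hint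
  linarith [hint]

lemma parts_sin (g g' g'' : ℝ → ℝ) (n : ℕ)
    (hg : ∀ θ, HasDerivAt g (g' θ) θ) (hg' : ∀ θ, HasDerivAt g' (g'' θ) θ)
    (hcg : Continuous g) (hcg'' : Continuous g'')
    (hper : g (2*π) = g 0) (hper' : g' (2*π) = g' 0) :
    ∫ θ in (0:ℝ)..2*π, g'' θ * Real.sin ((n:ℝ)*θ)
      = -(n:ℝ)^2 * ∫ θ in (0:ℝ)..2*π, g θ * Real.sin ((n:ℝ)*θ) := by
  set H : ℝ → ℝ := fun θ => g' θ * Real.sin ((n:ℝ)*θ) - (n:ℝ) * (g θ * Real.cos ((n:ℝ)*θ)) with hH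
  have hder : ∀ θ : ℝ, HasDerivAt H
      (g'' θ * Real.sin ((n:ℝ)*θ) + (n:ℝ)^2 * (g θ * Real.sin ((n:ℝ)*θ))) θ := by
    intro θ
    have hcosd : HasDerivAt (fun θ : ℝ => Real.cos ((n:ℝ)*θ)) (-Real.sin ((n:ℝ)*θ) * ((n:ℝ)*1)) θ :=
      ((hasDerivAt_id θ).const_mul (n:ℝ)).cos
    have hsind : HasDerivAt (fun θ : ℝ => Real.sin ((n:ℝ)*θ)) (Real.cos ((n:ℝ)*θ) * ((n:ℝ)*1)) θ :=
      ((hasDerivAt_id θ).const_mul (n:ℝ)).sin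
    have h := ((hg' θ).mul hsind).sub (((hg θ).mul hcosd).const_mul (n:ℝ))
    refine h.congr_deriv (Eq.symm ?_)
    ring
  have hcont : Continuous fun θ : ℝ => g'' θ * Real.sin ((n:ℝ)*θ)
      + (n:ℝ)^2 * (g θ * Real.sin ((n:ℝ)*θ)) := by
    fun_prop
  have hint := intervalIntegral.integral_eq_sub_of_hasDerivAt
    (f := H) (a := (0:ℝ)) (b := 2*π)
    (fun θ _ => hder θ) (hcont.intervalIntegrable _ _)
  have hbd : H (2*π) - H 0 = 0 := by
    simp only [hH]
    have c1 : Real.cos ((n:ℝ)*(2*π)) = 1 := Real.cos_nat_mul_two_pi n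
    have s1 : Real.sin ((n:ℝ)*(2*π)) = 0 := by
      have := Real.sin_add_nat_mul_two_pi 0 n
      simpa using this
    rw [c1, s1, hper, hper']
    simp
  rw [hbd] at hint
  have I1 : IntervalIntegrable (fun θ => g'' θ * Real.sin ((n:ℝ)*θ)) volume 0 (2*π) :=
    (hcg''.mul (by fun_prop)).intervalIntegrable _ _
  have I2 : IntervalIntegrable (fun θ => (n:ℝ)^2 * (g θ * Real.sin ((n:ℝ)*θ))) volume 0 (2*π) :=
    (continuous_const.mul (hcg.mul (by fun_prop))).intervalIntegrable _ _
  rw [intervalIntegral.integral_add I1 I2, intervalIntegral.integral_const_mul] at hint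
  linarith [hint]


lemma exists_fourier_ne (f : ℝ → ℝ) (hf : Continuous f)
    (hper : ∀ θ, f (θ + 2*π) = f θ) (θ₀ : ℝ) (h0 : f θ₀ ≠ 0) :
    ∃ n : ℕ, (∫ θ in (0:ℝ)..2*π, f θ * Real.cos ((n:ℝ)*θ)) ≠ 0 ∨
             (∫ θ in (0:ℝ)..2*π, f θ * Real.sin ((n:ℝ)*θ)) ≠ 0 := by
  by_contra hcon
  push_neg at hcon
  have hπ : 0 < 2*π := by positivity
  haveI : Fact (0 < 2*π) := ⟨hπ⟩
  -- extend the vanishing to integer frequencies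
  have hallZ : ∀ n : ℤ, (∫ θ in (0:ℝ)..2*π, f θ * Real.cos ((n:ℝ)*θ)) = 0 ∧
      (∫ θ in (0:ℝ)..2*π, f θ * Real.sin ((n:ℝ)*θ)) = 0 := by
    intro n
    rcases Int.natAbs_eq n with h | h
    · rw [h]; simp only [Int.cast_natCast]
      exact ⟨(hcon n.natAbs).1, (hcon n.natAbs).2⟩
    · rw [h]; simp only [Int.cast_neg, Int.cast_natCast]
      constructor
      · have heq : (fun θ => f θ * Real.cos (-(n.natAbs:ℝ)*θ))
            = fun θ => f θ * Real.cos ((n.natAbs:ℝ)*θ) := by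
          funext θ; rw [neg_mul, Real.cos_neg]
        rw [heq]; exact (hcon n.natAbs).1
      · have heq : (fun θ => f θ * Real.sin (-(n.natAbs:ℝ)*θ))
            = fun θ => -(f θ * Real.sin ((n.natAbs:ℝ)*θ)) := by
          funext θ; rw [neg_mul, Real.sin_neg]; ring
        rw [heq, intervalIntegral.integral_neg, (hcon n.natAbs).2, neg_zero]
  -- the complex-valued periodic function and its lift to the circle
  set fC : ℝ → ℂ := fun θ => (f θ : ℂ) with hfC
  have perC : Function.Periodic fC (2*π) := fun x => by simp [hfC, hper x]
  have hFcont : Continuous (AddCircle.liftIco (2*π) 0 fC) := by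
    apply AddCircle.liftIco_continuous
    · have h := hper 0
      rw [zero_add] at h
      simp only [hfC, zero_add]
      exact_mod_cast h.symm
    · exact (Complex.continuous_ofReal.comp hf).continuousOn
  set F : C(AddCircle (2*π), ℂ) := ⟨AddCircle.liftIco (2*π) 0 fC, hFcont⟩ with hF
  have hFcoe : ∀ x : ℝ, F (x : AddCircle (2*π)) = fC x := by
    intro x
    have hm0 := toIcoMod_mem_Ico hπ 0 x
    have hsub := self_sub_toIcoMod hπ 0 x
    have hcoe : (x : AddCircle (2*π)) = ((toIcoMod hπ 0 x : ℝ) : AddCircle (2*π)) := by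
      apply (QuotientAddGroup.eq_iff_sub_mem).mpr
      rw [hsub]
      exact AddSubgroup.zsmul_mem_zmultiples _ _
    have hlift : F ((toIcoMod hπ 0 x : ℝ) : AddCircle (2*π)) = fC (toIcoMod hπ 0 x) := by
      show AddCircle.liftIco (2*π) 0 fC ((toIcoMod hπ 0 x : ℝ) : AddCircle (2*π)) = _
      exact AddCircle.liftIco_coe_apply hm0
    rw [hcoe, hlift]
    have : toIcoMod hπ 0 x = x - (toIcoDiv hπ 0 x : ℤ) * (2*π) := by
      have := hsub
      push_cast [zsmul_eq_mul] at this ⊢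
      linarith [this]
    rw [this, perC.sub_int_mul_eq]
  -- all Fourier coefficients of F vanish
  have hcoef : ∀ i : ℤ, fourierCoeff (⇑F) i = 0 := by
    intro i
    rw [fourierCoeff_eq_intervalIntegral (⇑F) i 0]
    have hint : (∫ x in (0:ℝ)..0+2*π, fourier (-i) (x : AddCircle (2*π)) • F (x : AddCircle (2*π)))
        = 0 := by
      rw [zero_add]
      have hexp : ∀ x : ℝ, fourier (-i) (x : AddCircle (2*π)) • F (x : AddCircle (2*π))
          = ((f x * Real.cos ((-i : ℤ) * x) : ℝ) : ℂ)
            + ((f x * Real.sin ((-i : ℤ) * x) : ℝ) : ℂ) * Complex.I := by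
        intro x
        rw [hFcoe x, fourier_coe_apply]
        have harg : 2 * ↑π * Complex.I * ↑(-i) * ↑x / ↑(2*π)
            = (((-i : ℤ) * x : ℝ) : ℂ) * Complex.I := by
          have : (π : ℂ) ≠ 0 := by exact_mod_cast Real.pi_ne_zero
          field_simp
          push_cast; ring
        rw [harg, Complex.exp_mul_I]
        rw [show ((((-i : ℤ) * x : ℝ)) : ℂ) = ((((-i : ℤ) * x : ℝ) : ℝ) : ℂ) from rfl]
        rw [← Complex.ofReal_cos, ← Complex.ofReal_sin]
        simp only [smul_eq_mul, hfC]
        push_cast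
        ring
      rw [intervalIntegral.integral_congr (fun x _ => hexp x)]
      have i1 : IntervalIntegrable (fun x => ((f x * Real.cos ((-i : ℤ) * x) : ℝ) : ℂ))
          volume 0 (2*π) := by
        apply Continuous.intervalIntegrable; fun_prop
      have i2 : IntervalIntegrable (fun x => ((f x * Real.sin ((-i : ℤ) * x) : ℝ) : ℂ) * Complex.I)
          volume 0 (2*π) := by
        apply Continuous.intervalIntegrable; fun_prop
      rw [intervalIntegral.integral_add i1 i2, intervalIntegral.integral_mul_const,
        intervalIntegral.integral_ofReal, intervalIntegral.integral_ofReal,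
        (hallZ (-i)).1, (hallZ (-i)).2]
      simp
    rw [hint, smul_zero]
  -- conclude F = 0 via the Hilbert basis
  set FL := (ContinuousMap.toLp (E := ℂ) 2 (AddCircle.haarAddCircle (T := 2*π)) ℂ) F with hFL
  have hrepr : fourierBasis.repr FL = 0 := by
    apply lp.ext
    funext i
    rw [fourierBasis_repr]
    have hae : (⇑FL) =ᵐ[AddCircle.haarAddCircle] ⇑F := ContinuousMap.coeFn_toLp _ _
    have : fourierCoeff (⇑FL) i = fourierCoeff (⇑F) i := by
      unfold fourierCoeff
      apply MeasureTheory.integral_congr_ae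
      filter_upwards [hae] with x hx
      rw [hx]
    rw [this, hcoef i]
    rfl
  have hFL0 : FL = 0 := by
    have := congrArg (fourierBasis (T := 2*π)).repr.symm hrepr
    simpa using this
  have haeF : (⇑F) =ᵐ[AddCircle.haarAddCircle] (fun _ => (0:ℂ)) := by
    have h1 : (⇑FL) =ᵐ[AddCircle.haarAddCircle] ⇑F := ContinuousMap.coeFn_toLp _ _
    have h2 : (⇑FL) =ᵐ[AddCircle.haarAddCircle] (fun _ => (0:ℂ)) := by
      rw [hFL0]; exact Lp.coeFn_zero _ _ _
    exact h1.symm.trans h2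
  have hF0 : (⇑F) = (fun _ => (0:ℂ)) :=
    (Continuous.ae_eq_iff_eq (μ := AddCircle.haarAddCircle) F.continuous continuous_const).mp haeF
  have : F (θ₀ : AddCircle (2*π)) = 0 := by rw [hF0]
  rw [hFcoe θ₀] at this
  simp only [hfC] at this
  exact h0 (by exact_mod_cast this)


lemma partial_setup (u : ℝ → ℝ → ℝ) (hu : ContDiff ℝ 2 (Function.uncurry u)) :
    ∃ P1 P2 P11 P22 : ℝ → ℝ → ℝ,
      Continuous (Function.uncurry P1) ∧ Continuous (Function.uncurry P2) ∧
      Continuous (Function.uncurry P11) ∧ Continuous (Function.uncurry P22) ∧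
      (∀ t θ, HasDerivAt (fun x => u x θ) (P1 t θ) t) ∧
      (∀ t θ, HasDerivAt (fun x => P1 x θ) (P11 t θ) t) ∧
      (∀ t θ, HasDerivAt (fun y => u t y) (P2 t θ) θ) ∧
      (∀ t θ, HasDerivAt (fun y => P2 t y) (P22 t θ) θ) ∧
      (∀ t θ, deriv (deriv (fun x => u x θ)) t = P11 t θ) ∧
      (∀ t θ, deriv (deriv (u t)) θ = P22 t θ) := by
  set F : ℝ × ℝ → ℝ := Function.uncurry u with hF
  have hu' : ContDiff ℝ ((1:ℕ) + 1) F := by exact_mod_cast hu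
  obtain ⟨hdiff, -, hfd⟩ := contDiff_succ_iff_fderiv.mp hu'
  set G1 : ℝ × ℝ → ℝ := fun p => fderiv ℝ F p ((1:ℝ), (0:ℝ)) with hG1
  set G2 : ℝ × ℝ → ℝ := fun p => fderiv ℝ F p ((0:ℝ), (1:ℝ)) with hG2
  have hG1c : ContDiff ℝ 1 G1 :=
    (ContinuousLinearMap.apply ℝ ℝ ((1:ℝ), (0:ℝ))).contDiff.comp hfd
  have hG2c : ContDiff ℝ 1 G2 :=
    (ContinuousLinearMap.apply ℝ ℝ ((0:ℝ), (1:ℝ))).contDiff.comp hfd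
  have hG1c' : ContDiff ℝ ((0:ℕ) + 1) G1 := by exact_mod_cast hG1c
  have hG2c' : ContDiff ℝ ((0:ℕ) + 1) G2 := by exact_mod_cast hG2c
  obtain ⟨hG1d, -, hG1fd⟩ := contDiff_succ_iff_fderiv.mp hG1c'
  obtain ⟨hG2d, -, hG2fd⟩ := contDiff_succ_iff_fderiv.mp hG2c'
  set P11 : ℝ × ℝ → ℝ := fun p => fderiv ℝ G1 p ((1:ℝ), (0:ℝ)) with hP11
  set P22 : ℝ × ℝ → ℝ := fun p => fderiv ℝ G2 p ((0:ℝ), (1:ℝ)) with hP22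
  have hP11c : Continuous P11 :=
    (ContinuousLinearMap.apply ℝ ℝ ((1:ℝ), (0:ℝ))).continuous.comp
      hG1fd.continuous
  have hP22c : Continuous P22 :=
    (ContinuousLinearMap.apply ℝ ℝ ((0:ℝ), (1:ℝ))).continuous.comp
      hG2fd.continuous
  have hline1 : ∀ (t θ : ℝ), HasDerivAt (fun x : ℝ => (x, θ)) (((1:ℝ), (0:ℝ)) : ℝ × ℝ) t :=
    fun t θ => (hasDerivAt_id t).prodMk (hasDerivAt_const t θ)
  have hline2 : ∀ (t θ : ℝ), HasDerivAt (fun y : ℝ => (t, y)) (((0:ℝ), (1:ℝ)) : ℝ × ℝ) θ :=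
    fun t θ => (hasDerivAt_const θ t).prodMk (hasDerivAt_id θ)
  have hD1 : ∀ t θ, HasDerivAt (fun x => u x θ) (G1 (t, θ)) t := fun t θ =>
    by have := (hdiff (t, θ)).hasFDerivAt.comp_hasDerivAt t (hline1 t θ); exact this
  have hD2 : ∀ t θ, HasDerivAt (fun y => u t y) (G2 (t, θ)) θ := fun t θ =>
    (hdiff (t, θ)).hasFDerivAt.comp_hasDerivAt θ (hline2 t θ)
  have hD11 : ∀ t θ, HasDerivAt (fun x => G1 (x, θ)) (P11 (t, θ)) t := fun t θ =>
    by have := (hG1d (t, θ)).hasFDerivAt.comp_hasDerivAt t (hline1 t θ); exact this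
  have hD22 : ∀ t θ, HasDerivAt (fun y => G2 (t, y)) (P22 (t, θ)) θ := fun t θ =>
    (hG2d (t, θ)).hasFDerivAt.comp_hasDerivAt θ (hline2 t θ)
  refine ⟨fun t θ => G1 (t, θ), fun t θ => G2 (t, θ), fun t θ => P11 (t, θ),
    fun t θ => P22 (t, θ), ?_, ?_, ?_, ?_, hD1, hD11, hD2, hD22, ?_, ?_⟩
  · exact (hG1c.continuous).comp continuous_id'
  · exact (hG2c.continuous).comp continuous_id'
  · exact hP11c.comp continuous_id'
  · exact hP22c.comp continuous_id'
  · intro t θ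
    have hd1 : deriv (fun x => u x θ) = fun x => G1 (x, θ) := by
      funext x; exact (hD1 x θ).deriv
    rw [hd1]
    exact (hD11 t θ).deriv
  · intro t θ
    have hd2 : deriv (u t) = fun y => G2 (t, y) := by
      funext y; exact (hD2 t y).deriv
    rw [hd2]
    exact (hD22 t θ).deriv


lemma backward_build (r T lam : ℝ) (hr : 0 < r) (hT : 0 < T)
    (n : ℕ) (f f' f'' : ℝ → ℝ)
    (hf : ∀ t, HasDerivAt f (f' t) t) (hf' : ∀ t, HasDerivAt f' (f'' t) t)
    (hsmooth : ContDiff ℝ 2 f)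
    (hode : ∀ t, (1 / (1 + r ^ 2)) * f'' t
      + (-(n:ℝ)^2 / r ^ 2 + (1 / (r ^ 2 * (1 + r ^ 2)) + lam)) * f t = 0)
    (hrob0 : f' 0 + f 0 = 0) (hrobT : f' T + f T = 0) (hne : f 0 ≠ 0) :
    (∃ u : ℝ → ℝ → ℝ,
      ContDiff ℝ 2 (Function.uncurry u) ∧
      (∀ t θ : ℝ, u t (θ + 2 * π) = u t θ) ∧
      (∃ t ∈ Set.Icc (0 : ℝ) T, ∃ θ : ℝ, u t θ ≠ 0) ∧
      (∀ t ∈ Set.Icc (0 : ℝ) T, ∀ θ : ℝ,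
        (1 / (1 + r ^ 2)) * deriv (deriv (fun x => u x θ)) t
          + (1 / r ^ 2) * deriv (deriv (u t)) θ
          + (1 / (r ^ 2 * (1 + r ^ 2)) + lam) * u t θ = 0) ∧
      (∀ θ : ℝ, deriv (fun x => u x θ) 0 + u 0 θ = 0 ∧
        deriv (fun x => u x θ) T + u T θ = 0)) := by
  refine ⟨fun t θ => f t * Real.cos ((n:ℝ) * θ), ?_, ?_, ?_, ?_, ?_⟩
  · have : (Function.uncurry fun t θ => f t * Real.cos ((n:ℝ) * θ))
        = fun p : ℝ × ℝ => f p.1 * Real.cos ((n:ℝ) * p.2) := rfl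
    rw [this]
    exact (hsmooth.comp contDiff_fst).mul
      (Real.contDiff_cos.comp (contDiff_const.mul contDiff_snd))
  · intro t θ
    show f t * Real.cos ((n:ℝ) * (θ + 2 * π)) = f t * Real.cos ((n:ℝ) * θ)
    have he : (n:ℝ) * (θ + 2 * π) = (n:ℝ) * θ + (n:ℝ) * (2 * π) := by ring
    rw [he, Real.cos_add_nat_mul_two_pi]
  · exact ⟨0, ⟨le_refl 0, hT.le⟩, 0, by simpa using hne⟩
  · intro t _ θ
    -- t-derivatives
    have hd1 : deriv (fun x => f x * Real.cos ((n:ℝ) * θ)) = fun x => f' x * Real.cos ((n:ℝ) * θ) := by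
      funext x; exact ((hf x).mul_const _).deriv
    have hd11 : deriv (deriv (fun x => f x * Real.cos ((n:ℝ) * θ))) t
        = f'' t * Real.cos ((n:ℝ) * θ) := by
      rw [hd1]; exact ((hf' t).mul_const _).deriv
    -- θ-derivatives
    have hc1 : ∀ y : ℝ, HasDerivAt (fun y => f t * Real.cos ((n:ℝ) * y))
        (f t * (-Real.sin ((n:ℝ) * y) * ((n:ℝ) * 1))) y := by
      intro y
      exact (((hasDerivAt_id y).const_mul (n:ℝ)).cos).const_mul (f t)
    have hc2 : HasDerivAt (fun y => f t * (-Real.sin ((n:ℝ) * y) * ((n:ℝ) * 1)))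
        (f t * (-(Real.cos ((n:ℝ) * θ) * ((n:ℝ) * 1)) * ((n:ℝ) * 1))) θ := by
      have h := ((((hasDerivAt_id θ).const_mul (n:ℝ)).sin).neg.mul_const ((n:ℝ) * 1)).const_mul (f t)
      exact h
    have hd22 : deriv (deriv (fun y => f t * Real.cos ((n:ℝ) * y))) θ
        = f t * (-(Real.cos ((n:ℝ) * θ) * ((n:ℝ) * 1)) * ((n:ℝ) * 1)) := by
      have : deriv (fun y => f t * Real.cos ((n:ℝ) * y))
          = fun y => f t * (-Real.sin ((n:ℝ) * y) * ((n:ℝ) * 1)) := by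
        funext y; exact (hc1 y).deriv
      rw [this]; exact hc2.deriv
    show (1 / (1 + r ^ 2)) * deriv (deriv (fun x => f x * Real.cos ((n:ℝ) * θ))) t
          + (1 / r ^ 2) * deriv (deriv (fun y => f t * Real.cos ((n:ℝ) * y))) θ
          + (1 / (r ^ 2 * (1 + r ^ 2)) + lam) * (f t * Real.cos ((n:ℝ) * θ)) = 0
    rw [hd11, hd22]
    have h := hode t
    have hr2 : r ^ 2 ≠ 0 := by positivity
    have hr2' : 1 + r ^ 2 ≠ 0 := by positivity
    field_simp at h ⊢
    linear_combination (Real.cos ((n:ℝ) * θ)) * h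
  · intro θ
    have hd1 : ∀ s : ℝ, deriv (fun x => f x * Real.cos ((n:ℝ) * θ)) s
        = f' s * Real.cos ((n:ℝ) * θ) := by
      intro s; exact ((hf s).mul_const _).deriv
    constructor
    · show deriv (fun x => f x * Real.cos ((n:ℝ) * θ)) 0 + f 0 * Real.cos ((n:ℝ) * θ) = 0
      rw [hd1 0]
      linear_combination (Real.cos ((n:ℝ) * θ)) * hrob0
    · show deriv (fun x => f x * Real.cos ((n:ℝ) * θ)) T + f T * Real.cos ((n:ℝ) * θ) = 0
      rw [hd1 T]
      linear_combination (Real.cos ((n:ℝ) * θ)) * hrobT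


/-- spectrum of the Jacobi operator of a truncated Killing
cylinder `C_R^T` in hyperbolic 3-space as capillary surface supported on two
horospheres (Robin boundary conditions): an eigenfunction exists iff
`λ ∈ {(n²−1)/r² : n ∈ ℕ} ∪ {m²π²/((1+r²)T²) + (n²(1+r²)−1)/(r²(1+r²)) : m ≥ 1, n ∈ ℕ}`. -/
theorem killing_cylinder_horosphere_spectrum
    (r T lam : ℝ) (hr : 0 < r) (hT : 0 < T) :
    (∃ u : ℝ → ℝ → ℝ,
      ContDiff ℝ 2 (Function.uncurry u) ∧
      (∀ t θ : ℝ, u t (θ + 2 * π) = u t θ) ∧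
      (∃ t ∈ Set.Icc (0 : ℝ) T, ∃ θ : ℝ, u t θ ≠ 0) ∧
      (∀ t ∈ Set.Icc (0 : ℝ) T, ∀ θ : ℝ,
        (1 / (1 + r ^ 2)) * deriv (deriv (fun x => u x θ)) t
          + (1 / r ^ 2) * deriv (deriv (u t)) θ
          + (1 / (r ^ 2 * (1 + r ^ 2)) + lam) * u t θ = 0) ∧
      (∀ θ : ℝ, deriv (fun x => u x θ) 0 + u 0 θ = 0 ∧
        deriv (fun x => u x θ) T + u T θ = 0)) ↔
    ((∃ n : ℕ, lam = ((n : ℝ) ^ 2 - 1) / r ^ 2) ∨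
      (∃ m n : ℕ, 1 ≤ m ∧
        lam = (m : ℝ) ^ 2 * π ^ 2 / ((1 + r ^ 2) * T ^ 2)
          + ((n : ℝ) ^ 2 * (1 + r ^ 2) - 1) / (r ^ 2 * (1 + r ^ 2)))) := by
  have hr2 : r ^ 2 ≠ 0 := by positivity
  have h1r : (1:ℝ) + r ^ 2 ≠ 0 := by positivity
  have hT0 : T ≠ 0 := hT.ne'
  constructor
  · -- forward direction
    rintro ⟨u, hC2, hperu, ⟨t₀, ht₀, θ₀, hne0⟩, hPDE, hBC⟩
    obtain ⟨P1, P2, P11, P22, hP1c, hP2c, hP11c, hP22c, hD1, hD11, hD2, hD22, hE11, hE22⟩ :=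
      partial_setup u hC2
    have hucont : Continuous (Function.uncurry u) := hC2.continuous
    have slice : ∀ (g : ℝ → ℝ → ℝ), Continuous (Function.uncurry g) →
        ∀ t : ℝ, Continuous (fun θ => g t θ) := fun g hg t =>
      hg.comp (continuous_const.prodMk continuous_id)
    obtain ⟨n, hn⟩ := exists_fourier_ne (u t₀) (slice u hucont t₀) (hperu t₀) θ₀ hne0
    have hP2per : ∀ t : ℝ, P2 t (2 * π) = P2 t 0 := by
      intro t
      have hcomp : HasDerivAt (fun y : ℝ => u t (y + 2 * π)) (P2 t (0 + 2 * π) * 1) 0 :=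
        (hD2 t (0 + 2 * π)).comp (0:ℝ) ((hasDerivAt_id (0:ℝ)).add_const (2 * π))
      have heq : (fun y : ℝ => u t (y + 2 * π)) = u t := funext fun y => hperu t y
      rw [heq] at hcomp
      have := hcomp.unique (hD2 t 0)
      rw [zero_add] at this
      linarith [this]
    have core : ∀ w : ℝ → ℝ, Continuous w →
        (∀ t : ℝ, (∫ θ in (0:ℝ)..2*π, P22 t θ * w θ)
          = -(n:ℝ)^2 * ∫ θ in (0:ℝ)..2*π, u t θ * w θ) →
        (∫ θ in (0:ℝ)..2*π, u t₀ θ * w θ) ≠ 0 →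
        ((∃ n : ℕ, lam = ((n : ℝ) ^ 2 - 1) / r ^ 2) ∨
          (∃ m n : ℕ, 1 ≤ m ∧
            lam = (m : ℝ) ^ 2 * π ^ 2 / ((1 + r ^ 2) * T ^ 2)
              + ((n : ℝ) ^ 2 * (1 + r ^ 2) - 1) / (r ^ 2 * (1 + r ^ 2)))) := by
      intro w hw hparts hvne
      set c := (1 + r ^ 2) * ((n:ℝ)^2 / r ^ 2 - 1 / (r ^ 2 * (1 + r ^ 2)) - lam) with hc
      set v : ℝ → ℝ := fun t => ∫ θ in (0:ℝ)..2*π, u t θ * w θ with hv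
      set v1 : ℝ → ℝ := fun t => ∫ θ in (0:ℝ)..2*π, P1 t θ * w θ with hv1
      have hvd : ∀ t, HasDerivAt v (v1 t) t := fun t =>
        deriv_under_integral u P1 w hucont hP1c hw hD1 t
      have hv1d : ∀ t, HasDerivAt v1 (∫ θ in (0:ℝ)..2*π, P11 t θ * w θ) t := fun t =>
        deriv_under_integral P1 P11 w hP1c hP11c hw hD11 t
      have hODE : ∀ t ∈ Set.Icc (0:ℝ) T, HasDerivAt v1 (c * v t) t := by
        intro t ht
        have i1 : IntervalIntegrable (fun θ => (1 / (1 + r ^ 2)) * (P11 t θ * w θ))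
            volume 0 (2*π) :=
          (continuous_const.mul ((slice P11 hP11c t).mul hw)).intervalIntegrable _ _
        have i2 : IntervalIntegrable (fun θ => (1 / r ^ 2) * (P22 t θ * w θ))
            volume 0 (2*π) :=
          (continuous_const.mul ((slice P22 hP22c t).mul hw)).intervalIntegrable _ _
        have i3 : IntervalIntegrable
            (fun θ => (1 / (r ^ 2 * (1 + r ^ 2)) + lam) * (u t θ * w θ)) volume 0 (2*π) :=
          (continuous_const.mul ((slice u hucont t).mul hw)).intervalIntegrable _ _
        have hzero_fun : (fun θ : ℝ => (1 / (1 + r ^ 2)) * (P11 t θ * w θ)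
            + ((1 / r ^ 2) * (P22 t θ * w θ)
            + (1 / (r ^ 2 * (1 + r ^ 2)) + lam) * (u t θ * w θ))) = fun _ => (0:ℝ) := by
          funext θ
          have h := hPDE t ht θ
          rw [hE11 t θ, hE22 t θ] at h
          linear_combination (w θ) * h
        have h0 : (∫ θ in (0:ℝ)..2*π, ((1 / (1 + r ^ 2)) * (P11 t θ * w θ)
            + ((1 / r ^ 2) * (P22 t θ * w θ)
            + (1 / (r ^ 2 * (1 + r ^ 2)) + lam) * (u t θ * w θ)))) = 0 := by
          rw [hzero_fun]
          simp
        rw [intervalIntegral.integral_add i1 (i2.add i3),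
          intervalIntegral.integral_add i2 i3,
          intervalIntegral.integral_const_mul, intervalIntegral.integral_const_mul,
          intervalIntegral.integral_const_mul, hparts t] at h0
        have key : (∫ θ in (0:ℝ)..2*π, P11 t θ * w θ) = c * v t := by
          rw [hc]
          have hvt : (∫ θ in (0:ℝ)..2*π, u t θ * w θ) = v t := rfl
          rw [hvt] at h0
          field_simp at h0 ⊢
          linarith [h0]
        have := hv1d t
        rwa [key] at this
      have hR0 : v1 0 + v 0 = 0 := by
        have ia : IntervalIntegrable (fun θ => P1 0 θ * w θ) volume 0 (2*π) :=
          ((slice P1 hP1c 0).mul hw).intervalIntegrable _ _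
        have ib : IntervalIntegrable (fun θ => u 0 θ * w θ) volume 0 (2*π) :=
          ((slice u hucont 0).mul hw).intervalIntegrable _ _
        have hsum : v1 0 + v 0
            = ∫ θ in (0:ℝ)..2*π, (P1 0 θ * w θ + u 0 θ * w θ) :=
          (intervalIntegral.integral_add ia ib).symm
        rw [hsum]
        have hzf : (fun θ : ℝ => P1 0 θ * w θ + u 0 θ * w θ) = fun _ => (0:ℝ) := by
          funext θ
          have h := (hBC θ).1
          rw [(hD1 0 θ).deriv] at h
          linear_combination (w θ) * h
        rw [hzf]
        simp
      have hRT : v1 T + v T = 0 := by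
        have ia : IntervalIntegrable (fun θ => P1 T θ * w θ) volume 0 (2*π) :=
          ((slice P1 hP1c T).mul hw).intervalIntegrable _ _
        have ib : IntervalIntegrable (fun θ => u T θ * w θ) volume 0 (2*π) :=
          ((slice u hucont T).mul hw).intervalIntegrable _ _
        have hsum : v1 T + v T
            = ∫ θ in (0:ℝ)..2*π, (P1 T θ * w θ + u T θ * w θ) :=
          (intervalIntegral.integral_add ia ib).symm
        rw [hsum]
        have hzf : (fun θ : ℝ => P1 T θ * w θ + u T θ * w θ) = fun _ => (0:ℝ) := by
          funext θ
          have h := (hBC θ).2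
          rw [(hD1 T θ).deriv] at h
          linear_combination (w θ) * h
        rw [hzf]
        simp
      have hclass := robin_classify T c hT v v1 hvd hODE hR0 hRT ⟨t₀, ht₀, hvne⟩
      rcases hclass with hc1 | ⟨m, hm, hcm⟩
      · left
        refine ⟨n, ?_⟩
        rw [hc] at hc1
        have h2 : ((n:ℝ)^2 / r ^ 2 - 1 / (r ^ 2 * (1 + r ^ 2)) - lam) = 1 / (1 + r^2) := by
          rw [eq_div_iff h1r]
          linear_combination hc1
        have hl : lam = (n:ℝ)^2 / r^2 - 1/(r^2*(1+r^2)) - 1/(1+r^2) := by linarith [h2]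
        rw [hl]
        field_simp
        ring
      · right
        refine ⟨m, n, hm, ?_⟩
        rw [hc] at hcm
        have h2 : ((n:ℝ)^2 / r ^ 2 - 1 / (r ^ 2 * (1 + r ^ 2)) - lam)
            = -((m:ℝ)^2*π^2/T^2) / (1 + r^2) := by
          rw [eq_div_iff h1r]
          linear_combination hcm
        have hl : lam = (n:ℝ)^2 / r^2 - 1/(r^2*(1+r^2)) + ((m:ℝ)^2*π^2/T^2)/(1+r^2) := by
          linear_combination -h2
        rw [hl]
        field_simp
        ring
    rcases hn with hcos | hsin
    · refine core (fun θ => Real.cos ((n:ℝ)*θ)) (by fun_prop) ?_ hcos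
      intro t
      have hper2 : u t (2*π) = u t 0 := by
        have := hperu t 0; rwa [zero_add] at this
      exact parts_cos (u t) (P2 t) (P22 t) n (hD2 t) (hD22 t)
        (slice u hucont t) (slice P22 hP22c t) hper2 (hP2per t)
    · refine core (fun θ => Real.sin ((n:ℝ)*θ)) (by fun_prop) ?_ hsin
      intro t
      have hper2 : u t (2*π) = u t 0 := by
        have := hperu t 0; rwa [zero_add] at this
      exact parts_sin (u t) (P2 t) (P22 t) n (hD2 t) (hD22 t)
        (slice u hucont t) (slice P22 hP22c t) hper2 (hP2per t)
  · -- backward direction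
    rintro (⟨n, hlam⟩ | ⟨m, n, hm, hlam⟩)
    · refine backward_build r T lam hr hT n (fun t => Real.exp (-t))
        (fun t => -Real.exp (-t)) (fun t => Real.exp (-t)) ?_ ?_ ?_ ?_ ?_ ?_ ?_
      · intro t
        have h := (Real.hasDerivAt_exp (-t)).comp t ((hasDerivAt_id t).neg)
        refine h.congr_deriv (Eq.symm ?_)
        simp [mul_comm]
      · intro t
        have h := ((Real.hasDerivAt_exp (-t)).comp t ((hasDerivAt_id t).neg)).neg
        refine h.congr_deriv (Eq.symm ?_)
        simp [mul_comm]
      · exact Real.contDiff_exp.comp contDiff_id.neg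
      · intro t
        rw [hlam]
        field_simp
        ring
      · simp
      · ring
      · simp [Real.exp_ne_zero]
    · set μ : ℝ := (m:ℝ) * π / T with hμ
      have hμpos : 0 < μ := by
        rw [hμ]
        have hm1 : (1:ℝ) ≤ (m:ℝ) := by exact_mod_cast hm
        positivity
      have hμT : μ * T = (m:ℝ) * π := by
        rw [hμ]; field_simp
      refine backward_build r T lam hr hT n
        (fun t => μ * Real.cos (μ*t) - Real.sin (μ*t))
        (fun t => -(μ^2) * Real.sin (μ*t) - μ * Real.cos (μ*t))
        (fun t => -(μ^2) * (μ * Real.cos (μ*t) - Real.sin (μ*t))) ?_ ?_ ?_ ?_ ?_ ?_ ?_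
      · intro t
        have h := ((((hasDerivAt_id t).const_mul μ).cos).const_mul μ).sub
          (((hasDerivAt_id t).const_mul μ).sin)
        refine h.congr_deriv (Eq.symm ?_)
        simp only [id]
        ring
      · intro t
        have h := ((((hasDerivAt_id t).const_mul μ).sin).const_mul (-(μ^2))).sub
          ((((hasDerivAt_id t).const_mul μ).cos).const_mul μ)
        refine h.congr_deriv (Eq.symm ?_)
        simp only [id]
        ring
      · exact ((contDiff_const.mul (Real.contDiff_cos.comp (contDiff_const.mul contDiff_id))).sub
          (Real.contDiff_sin.comp (contDiff_const.mul contDiff_id)))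
      · intro t
        rw [hlam, hμ]
        field_simp
        ring
      · simp
      · have hsin : Real.sin (μ * T) = 0 := by
          rw [hμT]; exact Real.sin_nat_mul_pi m
        linear_combination (-(μ^2) - 1) * hsin
      · simp [hμpos.ne']
end

section
/- Let r > 0, T > 0 and set ϖ = 1/(r²(1+r²)). There exists a smooth function u : ℝ² → ℝ, 2π-periodic in each variable (u(t+2π,θ) = u(t,θ) = u(t,θ+2π) for all (t,θ)) and not identically zero, satisfying (2π/T)²·(1/(1+r²))·∂²u/∂t² + (1/r²)·∂²u/∂θ² + ϖ·u = 0 at every point of ℝ², if and only if T = 2πmr for some positive integer m. -/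
open Real MeasureTheory intervalIntegral

noncomputable section
private def eK (k : ℤ) (x : ℝ) : ℂ := Complex.exp (-(k:ℂ) * x * Complex.I)

private lemma fourier_complete {g : ℝ → ℂ} (hg : Continuous g)
    (hper : Function.Periodic g (2*π))
    (h : ∀ n : ℤ, (∫ x in (0:ℝ)..2*π, g x * eK n x) = 0) : ∀ x, g x = 0 := by
  have h2π : 0 < 2*π := by positivity
  haveI : Fact (0 < 2*π) := ⟨h2π⟩
  -- the lift to the circle
  have hIco : ∀ x : ℝ, AddCircle.liftIco (2*π) 0 g (x : AddCircle (2*π)) = g x := by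
    intro x
    have hmem := toIcoMod_mem_Ico h2π 0 x
    have hy : (((toIcoMod h2π 0 x : ℝ)) : AddCircle (2*π)) = (x : AddCircle (2*π)) := by
      rw [← self_sub_toIcoDiv_zsmul h2π 0 x]
      have : ((toIcoDiv h2π 0 x • (2*π) : ℝ) : AddCircle (2*π)) = 0 := by
        exact (QuotientAddGroup.eq_zero_iff _).2 (AddSubgroup.zsmul_mem_zmultiples _ _)
      push_cast [QuotientAddGroup.mk_sub]
      rw [this, sub_zero]
    rw [← hy, AddCircle.liftIco_coe_apply (by simpa using hmem)]
    rw [← self_sub_toIcoDiv_zsmul h2π 0 x]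
    exact hper.sub_zsmul_eq _
  set F : C(AddCircle (2*π), ℂ) :=
    ⟨AddCircle.liftIco (2*π) 0 g,
      AddCircle.liftIco_zero_continuous (by simpa using (hper 0).symm) hg.continuousOn⟩ with hF
  have hcoeff : ∀ n : ℤ, fourierCoeff (F : AddCircle (2*π) → ℂ) n = 0 := by
    intro n
    rw [fourierCoeff_eq_intervalIntegral _ n 0]
    have : ∀ x : ℝ, @fourier (2*π) (-n) (x : AddCircle (2*π)) • (F : AddCircle (2*π) → ℂ) x
        = g x * eK n x := by
      intro x
      have h1 : @fourier (2*π) (-n) (x : AddCircle (2*π)) = eK n x := by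
        rw [fourier_coe_apply]
        unfold eK
        congr 1
        push_cast
        rw [div_eq_iff (by simp [Real.pi_ne_zero] : (2*(π:ℂ)) ≠ 0)]
        ring
      show _ • (AddCircle.liftIco (2*π) 0 g (x : AddCircle (2*π))) = _
      rw [h1, hIco, smul_eq_mul, mul_comm]
    rw [zero_add]
    have : (∫ x in (0:ℝ)..2*π, @fourier (2*π) (-n) (x : AddCircle (2*π)) • (F : AddCircle (2*π) → ℂ) x)
        = ∫ x in (0:ℝ)..2*π, g x * eK n x := by
      apply intervalIntegral.integral_congr
      intro x _
      beta_reduce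
      exact this x
    rw [this, h n, smul_zero]
  -- pass to L²
  set fL := ContinuousMap.toLp (E := ℂ) 2 AddCircle.haarAddCircle ℂ F with hfL
  have hrepr : ∀ i : ℤ, fourierBasis.repr fL i = 0 := by
    intro i
    rw [fourierBasis_repr, fourierCoeff_toLp, hcoeff]
  have hfL0 : fL = 0 := by
    apply fourierBasis.repr.injective
    ext i
    simp [hrepr i]
  have key : (ContinuousMap.toLp (E := ℂ) 2 AddCircle.haarAddCircle ℂ) F
      = (ContinuousMap.toLp (E := ℂ) 2 AddCircle.haarAddCircle ℂ) 0 := by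
    rw [← hfL, hfL0, map_zero]
  have hF0 : F = 0 := ContinuousMap.toLp_injective AddCircle.haarAddCircle key
  intro x
  rw [← hIco x]
  show (F : AddCircle (2*π) → ℂ) _ = 0
  rw [hF0]
  rfl
private lemma eK_hasDerivAt (k : ℤ) (x : ℝ) :
    HasDerivAt (eK k) (-(k:ℂ) * Complex.I * eK k x) x := by
  unfold eK
  have h1 : HasDerivAt (fun x : ℝ => -(k:ℂ) * x * Complex.I) (-(k:ℂ) * Complex.I) x := by
    have := (Complex.ofRealCLM.hasDerivAt (x := x)).const_mul (-(k:ℂ))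
    simpa [mul_comm, mul_assoc, mul_left_comm] using (this.mul_const Complex.I)
  simpa [mul_comm] using h1.cexp

private lemma eK_continuous (k : ℤ) : Continuous (eK k) := by
  unfold eK; fun_prop

private lemma eK_periodic (k : ℤ) (x : ℝ) : eK k (x + 2*π) = eK k x := by
  unfold eK
  rw [show -(k:ℂ) * ((x:ℝ) + 2*π : ℝ) * Complex.I
      = -(k:ℂ) * x * Complex.I + ((-k : ℤ) : ℂ) * (2 * π * Complex.I) by push_cast; ring,
    Complex.exp_add, Complex.exp_int_mul_two_pi_mul_I, mul_one]

private lemma periodic_deriv' {f : ℝ → ℝ} (h : ∀ x, f (x + 2*π) = f x) (x : ℝ) :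
    deriv f (x + 2*π) = deriv f x := by
  have : (fun y => f (y + 2*π)) = f := funext h
  conv_rhs => rw [← this]
  rw [deriv_comp_add_const]

/-- Integration by parts twice against `eK k` for a real C² periodic function. -/
private lemma ibp_real {f : ℝ → ℝ} (hf : ContDiff ℝ 2 f) (hper : ∀ x, f (x + 2*π) = f x) (k : ℤ) :
    ∫ x in (0:ℝ)..2*π, ((deriv (deriv f) x : ℝ) : ℂ) * eK k x
      = (-(k:ℂ)^2) * ∫ x in (0:ℝ)..2*π, ((f x : ℝ) : ℂ) * eK k x := by
  have h2π : (0:ℝ) ≤ 2*π := by positivity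
  have hd1 : Differentiable ℝ f := hf.differentiable (by norm_num)
  have hf' : ContDiff ℝ 1 (deriv f) := by
    have := (contDiff_succ_iff_deriv (n := 1)).mp (by exact_mod_cast hf)
    exact this.2.2
  have hd2 : Differentiable ℝ (deriv f) := hf'.differentiable (by norm_num)
  have hc2 : Continuous (deriv (deriv f)) := hf'.continuous_deriv (le_refl 1)
  have hper' : ∀ x, deriv f (x + 2*π) = deriv f x := periodic_deriv' hper
  -- complexified functions
  set F : ℝ → ℂ := fun x => ((f x : ℝ) : ℂ) with hF
  set F' : ℝ → ℂ := fun x => ((deriv f x : ℝ) : ℂ) with hF'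
  set F'' : ℝ → ℂ := fun x => ((deriv (deriv f) x : ℝ) : ℂ) with hF''
  have hDF : ∀ x, HasDerivAt F (F' x) x := fun x => (hd1 x).hasDerivAt.ofReal_comp
  have hDF' : ∀ x, HasDerivAt F' (F'' x) x := fun x => (hd2 x).hasDerivAt.ofReal_comp
  have hcF : Continuous F := Complex.continuous_ofReal.comp hf.continuous
  have hcF' : Continuous F' := Complex.continuous_ofReal.comp (hf'.continuous)
  have hcF'' : Continuous F'' := Complex.continuous_ofReal.comp hc2
  have heK : Continuous (eK k) := eK_continuous k
  have heK' : Continuous (fun x => -(k:ℂ) * Complex.I * eK k x) := by fun_prop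
  -- first IBP : ∫ F'' e + ∫ F' e' = 0
  have step1 : (∫ x in (0:ℝ)..2*π, (F'' x * eK k x + F' x * (-(k:ℂ) * Complex.I * eK k x)))
      = F' (2*π) * eK k (2*π) - F' 0 * eK k 0 := by
    apply intervalIntegral.integral_deriv_mul_eq_sub_of_hasDerivAt
    · exact hcF'.continuousOn
    · exact heK.continuousOn
    · exact fun x _ => hDF' x
    · exact fun x _ => eK_hasDerivAt k x
    · exact hcF''.intervalIntegrable _ _
    · exact heK'.intervalIntegrable _ _
  have step2 : (∫ x in (0:ℝ)..2*π, (F' x * eK k x + F x * (-(k:ℂ) * Complex.I * eK k x)))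
      = F (2*π) * eK k (2*π) - F 0 * eK k 0 := by
    apply intervalIntegral.integral_deriv_mul_eq_sub_of_hasDerivAt
    · exact hcF.continuousOn
    · exact heK.continuousOn
    · exact fun x _ => hDF x
    · exact fun x _ => eK_hasDerivAt k x
    · exact hcF'.intervalIntegrable _ _
    · exact heK'.intervalIntegrable _ _
  have hbd1 : F' (2*π) * eK k (2*π) - F' 0 * eK k 0 = 0 := by
    rw [hF']
    simp only []
    rw [show deriv f (2*π) = deriv f 0 by simpa using hper' 0,
      show eK k (2*π) = eK k 0 by simpa using eK_periodic k 0, sub_self]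
  have hbd2 : F (2*π) * eK k (2*π) - F 0 * eK k 0 = 0 := by
    rw [hF]
    simp only []
    rw [show f (2*π) = f 0 by simpa using hper 0,
      show eK k (2*π) = eK k 0 by simpa using eK_periodic k 0, sub_self]
  rw [intervalIntegral.integral_add (by exact (hcF''.mul heK).intervalIntegrable _ _)
    (by exact (hcF'.mul heK').intervalIntegrable _ _)] at step1
  rw [intervalIntegral.integral_add (by exact (hcF'.mul heK).intervalIntegrable _ _)
    (by exact (hcF.mul heK').intervalIntegrable _ _)] at step2
  rw [hbd1] at step1; rw [hbd2] at step2
  have comm : ∀ G : ℝ → ℂ, (∫ x in (0:ℝ)..2*π, G x * (-(k:ℂ) * Complex.I * eK k x))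
      = (-(k:ℂ) * Complex.I) * ∫ x in (0:ℝ)..2*π, G x * eK k x := by
    intro G
    rw [← intervalIntegral.integral_const_mul]
    apply intervalIntegral.integral_congr
    intro x _
    beta_reduce
    ring
  rw [comm] at step1 step2
  linear_combination step1 - (-(k:ℂ) * Complex.I) * step2
    + ((k:ℂ)^2 * (∫ x in (0:ℝ)..2*π, F x * eK k x)) * Complex.I_sq
private lemma swapIntegral19 {F : ℝ → ℝ → ℂ} (hF : Continuous (Function.uncurry F)) :
    (∫ t in (0:ℝ)..2*π, ∫ θ in (0:ℝ)..2*π, F t θ)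
      = ∫ θ in (0:ℝ)..2*π, ∫ t in (0:ℝ)..2*π, F t θ := by
  have h2π : (0:ℝ) ≤ 2*π := by positivity
  rw [intervalIntegral.integral_of_le h2π]
  rw [intervalIntegral.integral_of_le h2π]
  simp_rw [intervalIntegral.integral_of_le h2π]

  apply MeasureTheory.integral_integral_swap
  have : IntegrableOn (Function.uncurry F) (Set.Ioc 0 (2*π) ×ˢ Set.Ioc 0 (2*π))
      (volume.prod volume) := by
    apply (hF.continuousOn.integrableOn_compact (IsCompact.prod isCompact_Icc isCompact_Icc)).mono_set
    exact Set.prod_mono Set.Ioc_subset_Icc_self Set.Ioc_subset_Icc_self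
  rw [Measure.prod_restrict]
  exact this

private lemma hasDeriv_partial_fst {f : ℝ × ℝ → ℝ} (hf : Differentiable ℝ f) (t θ : ℝ) :
    HasDerivAt (fun x => f (x, θ)) (fderiv ℝ f (t, θ) (1, 0)) t := by
  have h1 : HasDerivAt (fun x : ℝ => (x, θ)) ((1:ℝ), (0:ℝ)) t :=
    (hasDerivAt_id t).prodMk (hasDerivAt_const t θ)
  exact (hf (t, θ)).hasFDerivAt.comp_hasDerivAt t h1

private lemma hasDeriv_partial_snd {f : ℝ × ℝ → ℝ} (hf : Differentiable ℝ f) (t θ : ℝ) :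
    HasDerivAt (fun y => f (t, y)) (fderiv ℝ f (t, θ) (0, 1)) θ := by
  have h1 : HasDerivAt (fun y : ℝ => (t, y)) ((0:ℝ), (1:ℝ)) θ :=
    (hasDerivAt_const θ t).prodMk (hasDerivAt_id θ)
  exact (hf (t, θ)).hasFDerivAt.comp_hasDerivAt θ h1

private lemma contDiff_partial {f : ℝ × ℝ → ℝ} (hf : ContDiff ℝ 2 f) (v : ℝ × ℝ) :
    ContDiff ℝ 1 (fun p => fderiv ℝ f p v) := by
  have h1 : ContDiff ℝ 1 (fderiv ℝ f) := hf.fderiv_right (by norm_num)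
  exact ((ContinuousLinearMap.apply ℝ ℝ v).contDiff).comp h1

/-- the spectral / arithmetic fact -/
private lemma spectral19 {r T : ℝ} (hr : 0 < r) (hT : 0 < T)
    (hnot : ¬ ∃ m : ℕ, 1 ≤ m ∧ T = 2 * π * (m : ℝ) * r) (k l : ℤ) :
    (2*π/T)^2 * (1/(1+r^2)) * (k:ℝ)^2 + (1/r^2) * (l:ℝ)^2 ≠ 1/(r^2*(1+r^2)) := by
  intro heq
  have hπ := Real.pi_pos
  have hr2 : (0:ℝ) < r^2 := by positivity
  have h1r : (0:ℝ) < 1 + r^2 := by positivity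
  have hl : l = 0 := by
    by_contra hl0
    have h1 : (1:ℝ) ≤ (l:ℝ)^2 := by
      have h1' : (1:ℤ) ≤ l^2 := by nlinarith [Int.one_le_abs hl0, sq_abs l, abs_nonneg l]
      exact_mod_cast h1'
    have h2 : (0:ℝ) ≤ (2*π/T)^2 * (1/(1+r^2)) * (k:ℝ)^2 := by positivity
    have h3 : 1/r^2 ≤ (1/r^2) * (l:ℝ)^2 := by
      nlinarith [mul_le_mul_of_nonneg_left h1 (le_of_lt (by positivity : (0:ℝ) < 1/r^2))]
    have h4 : 1/(r^2*(1+r^2)) < 1/r^2 := by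
      rw [div_lt_div_iff₀ (by positivity) hr2]
      nlinarith
    linarith
  subst hl
  norm_num at heq
  have hk0 : k ≠ 0 := by
    rintro rfl
    have hpos : (0:ℝ) < 1/(r^2*(1+r^2)) := by positivity
    norm_num at heq
    rcases heq with h | h <;> nlinarith
  have hT' : T ≠ 0 := ne_of_gt hT
  have hr' : r ≠ 0 := ne_of_gt hr
  have key : (2*π*(k:ℝ)*r)^2 = T^2 := by
    field_simp at heq
    have heq2 : ((2*π)^2*(k:ℝ)^2*r^2) * (1+r^2) = T^2 * (1+r^2) := by linear_combination (1+r^2) * heq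
    have heq3 := mul_right_cancel₀ (ne_of_gt h1r) heq2
    linear_combination heq3
  have key2 : (2*π*|(k:ℝ)| * r)^2 = T^2 := by
    rw [← key, show (2*π*|(k:ℝ)| * r)^2 = (2*π)^2 * |(k:ℝ)|^2 * r^2 by ring, sq_abs]
    ring
  have hpos : (0:ℝ) < 2*π*|(k:ℝ)| * r := by
    have : (0:ℝ) < |(k:ℝ)| := abs_pos.mpr (by exact_mod_cast hk0)
    positivity
  have hTeq : T = 2*π*|(k:ℝ)| * r := by
    have hz : (T - 2*π*|(k:ℝ)| * r) * (T + 2*π*|(k:ℝ)| * r) = 0 := by nlinarith [key2]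
    rcases mul_eq_zero.mp hz with h | h
    · linarith
    · linarith
  exact hnot ⟨k.natAbs, by omega, by rw [hTeq, Nat.cast_natAbs, Int.cast_abs]⟩

private lemma forward19 (r T : ℝ) (hr : 0 < r) (hT : 0 < T)
    (u : ℝ → ℝ → ℝ) (hu2 : ContDiff ℝ 2 (Function.uncurry u))
    (hper : ∀ t θ : ℝ, u (t + 2*π) θ = u t θ ∧ u t (θ + 2*π) = u t θ)
    (hpde : ∀ t θ : ℝ,
      (2*π/T)^2 * (1/(1+r^2)) * deriv (deriv (fun x => u x θ)) t
        + (1/r^2) * deriv (deriv (u t)) θ + (1/(r^2*(1+r^2))) * u t θ = 0)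
    (hnot : ¬ ∃ m : ℕ, 1 ≤ m ∧ T = 2*π*(m:ℝ)*r) : ∀ t θ, u t θ = 0 := by
  have hπ := Real.pi_pos
  set f : ℝ × ℝ → ℝ := Function.uncurry u with hff
  have hf : ContDiff ℝ 2 f := hu2
  have hfdiff : Differentiable ℝ f := hf.differentiable (by norm_num)
  set gT : ℝ × ℝ → ℝ := fun p => fderiv ℝ f p (1, 0) with hgTdef
  set gΘ : ℝ × ℝ → ℝ := fun p => fderiv ℝ f p (0, 1) with hgΘdef
  have hgT : ContDiff ℝ 1 gT := contDiff_partial hf _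
  have hgΘ : ContDiff ℝ 1 gΘ := contDiff_partial hf _
  set utt : ℝ → ℝ → ℝ := fun t θ => fderiv ℝ gT (t, θ) (1, 0) with huttdef
  set uθθ : ℝ → ℝ → ℝ := fun t θ => fderiv ℝ gΘ (t, θ) (0, 1) with huθθdef
  have sec_t : ∀ θ, ContDiff ℝ 2 (fun x => u x θ) := fun θ =>
    hf.comp (contDiff_id.prodMk contDiff_const)
  have sec_θ : ∀ t, ContDiff ℝ 2 (u t) := fun t =>
    hf.comp (contDiff_const.prodMk contDiff_id)
  have eq1 : ∀ θ, deriv (fun x => u x θ) = fun t => gT (t, θ) := by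
    intro θ
    funext t
    exact (hasDeriv_partial_fst hfdiff t θ).deriv
  have eqtt : ∀ t θ, deriv (deriv (fun x => u x θ)) t = utt t θ := by
    intro t θ
    rw [eq1 θ]
    exact (hasDeriv_partial_fst (hgT.differentiable one_ne_zero) t θ).deriv
  have eq2 : ∀ t, deriv (u t) = fun θ => gΘ (t, θ) := by
    intro t
    funext θ
    exact (hasDeriv_partial_snd hfdiff t θ).deriv
  have eqθθ : ∀ t θ, deriv (deriv (u t)) θ = uθθ t θ := by
    intro t θ
    rw [eq2 t]
    exact (hasDeriv_partial_snd (hgΘ.differentiable one_ne_zero) t θ).deriv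
  have hutt : Continuous (Function.uncurry utt) := by
    have : Continuous (fderiv ℝ gT) := hgT.continuous_fderiv one_ne_zero
    exact this.clm_apply continuous_const
  have hu_cont : Continuous (Function.uncurry u) := hf.continuous
  set A : ℝ := (2*π/T)^2 * (1/(1+r^2)) with hA
  set B : ℝ := 1/r^2 with hB
  set W : ℝ := 1/(r^2*(1+r^2)) with hW
  have hPDE : ∀ t θ, A * utt t θ + B * uθθ t θ + W * u t θ = 0 := by
    intro t θ
    rw [← eqtt, ← eqθθ]
    exact hpde t θ
  set v : ℝ → ℝ → ℂ := fun t θ => ((u t θ : ℝ) : ℂ) with hv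
  have hv_cont : Continuous (Function.uncurry v) := by
    have : Function.uncurry v = Complex.ofReal ∘ Function.uncurry u := rfl
    rw [this]
    exact Complex.continuous_ofReal.comp hu_cont
  have hvsec : ∀ θ, Continuous (fun t => v t θ) := fun θ =>
    hv_cont.comp (continuous_id.prodMk continuous_const)
  have hvsec' : ∀ t, Continuous (v t) := fun t =>
    hv_cont.comp (continuous_const.prodMk continuous_id)
  have huttsec : ∀ t, Continuous (utt t) := fun t =>
    hutt.comp (continuous_const.prodMk continuous_id)
  -- the double Fourier coefficients vanish
  have hc0 : ∀ k l : ℤ,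
      (∫ θ in (0:ℝ)..2*π, (∫ t in (0:ℝ)..2*π, v t θ * eK k t) * eK l θ) = 0 := by
    intro k l
    -- joint continuity of the two integrands we shall swap
    have hcont1 : Continuous (Function.uncurry (fun t θ => v t θ * eK l θ * eK k t)) := by
      apply Continuous.mul
      · exact (hv_cont.mul ((eK_continuous l).comp continuous_snd))
      · exact (eK_continuous k).comp continuous_fst
    have hcont2 : Continuous
        (Function.uncurry (fun t θ => ((utt t θ : ℝ) : ℂ) * eK l θ * eK k t)) := by
      apply Continuous.mul
      · exact ((Complex.continuous_ofReal.comp hutt).mul ((eK_continuous l).comp continuous_snd))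
      · exact (eK_continuous k).comp continuous_fst
    -- `hsplit`: for every t, the θ-integrated PDE
    have hsplit : ∀ t,
        (A:ℂ) * (∫ θ in (0:ℝ)..2*π, ((utt t θ : ℝ) : ℂ) * eK l θ)
          + ((B:ℂ) * (-(l:ℂ)^2) + (W:ℂ)) * (∫ θ in (0:ℝ)..2*π, v t θ * eK l θ) = 0 := by
      intro t
      have cutt : Continuous (fun θ => ((utt t θ : ℝ) : ℂ) * eK l θ) :=
        (Complex.continuous_ofReal.comp (huttsec t)).mul (eK_continuous l)
      have cuθθ : Continuous (fun θ => ((uθθ t θ : ℝ) : ℂ) * eK l θ) := by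
        apply Continuous.mul _ (eK_continuous l)
        apply Complex.continuous_ofReal.comp
        have : Continuous (fderiv ℝ gΘ) := hgΘ.continuous_fderiv one_ne_zero
        exact (this.clm_apply continuous_const).comp (continuous_const.prodMk continuous_id)
      have cu : Continuous (fun θ => v t θ * eK l θ) := (hvsec' t).mul (eK_continuous l)
      have hibp : (∫ θ in (0:ℝ)..2*π, ((uθθ t θ : ℝ) : ℂ) * eK l θ)
          = (-(l:ℂ)^2) * (∫ θ in (0:ℝ)..2*π, v t θ * eK l θ) := by
        calc (∫ θ in (0:ℝ)..2*π, ((uθθ t θ : ℝ) : ℂ) * eK l θ)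
            = ∫ θ in (0:ℝ)..2*π, ((deriv (deriv (u t)) θ : ℝ) : ℂ) * eK l θ := by
              apply intervalIntegral.integral_congr
              intro θ _
              beta_reduce
              show ((uθθ t θ : ℝ) : ℂ) * eK l θ = _
              rw [eqθθ]
          _ = (-(l:ℂ)^2) * ∫ θ in (0:ℝ)..2*π, ((u t θ : ℝ) : ℂ) * eK l θ :=
              ibp_real (sec_θ t) (fun θ => (hper t θ).2) l
      have hzero : (∫ θ in (0:ℝ)..2*π,
          ((A:ℂ) * (((utt t θ : ℝ):ℂ) * eK l θ) + ((B:ℂ) * (((uθθ t θ : ℝ):ℂ) * eK l θ)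
            + (W:ℂ) * (v t θ * eK l θ)))) = 0 := by
        have e1 : ∀ θ, ((A:ℂ) * (((utt t θ : ℝ):ℂ) * eK l θ) + ((B:ℂ) * (((uθθ t θ : ℝ):ℂ) * eK l θ)
            + (W:ℂ) * (v t θ * eK l θ)))
            = ((A * utt t θ + B * uθθ t θ + W * u t θ : ℝ) : ℂ) * eK l θ := by
          intro θ
          push_cast
          ring
        have e2 : ∀ θ, ((A * utt t θ + B * uθθ t θ + W * u t θ : ℝ) : ℂ) * eK l θ = 0 := by
          intro θ
          rw [hPDE t θ]
          simp
        rw [intervalIntegral.integral_congr (g := fun _ => (0:ℂ)) (fun θ _ => (e1 θ).trans (e2 θ))]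
        simp
      rw [intervalIntegral.integral_add (by exact (continuous_const.mul cutt).intervalIntegrable _ _)
          (by exact ((continuous_const.mul cuθθ).add (continuous_const.mul cu)).intervalIntegrable _ _),
        intervalIntegral.integral_add (by exact (continuous_const.mul cuθθ).intervalIntegrable _ _)
          (by exact (continuous_const.mul cu).intervalIntegrable _ _),
        intervalIntegral.integral_const_mul, intervalIntegral.integral_const_mul,
        intervalIntegral.integral_const_mul, hibp] at hzero
      linear_combination hzero
    -- continuity of the parametric θ-integrals
    have hIttCont : Continuous (fun t => ∫ θ in (0:ℝ)..2*π, ((utt t θ : ℝ) : ℂ) * eK l θ) := by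
      apply intervalIntegral.continuous_parametric_intervalIntegral_of_continuous'
      exact (Complex.continuous_ofReal.comp hutt).mul ((eK_continuous l).comp continuous_snd)
    have hIuCont : Continuous (fun t => ∫ θ in (0:ℝ)..2*π, v t θ * eK l θ) := by
      apply intervalIntegral.continuous_parametric_intervalIntegral_of_continuous'
      exact hv_cont.mul ((eK_continuous l).comp continuous_snd)
    -- integrate hsplit against eK k
    have hzero2 : (A:ℂ) * (∫ t in (0:ℝ)..2*π,
          (∫ θ in (0:ℝ)..2*π, ((utt t θ : ℝ) : ℂ) * eK l θ) * eK k t)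
        + ((B:ℂ) * (-(l:ℂ)^2) + (W:ℂ)) * (∫ t in (0:ℝ)..2*π,
          (∫ θ in (0:ℝ)..2*π, v t θ * eK l θ) * eK k t) = 0 := by
      have e3 : ∀ t, ((A:ℂ) * ((∫ θ in (0:ℝ)..2*π, ((utt t θ : ℝ) : ℂ) * eK l θ) * eK k t)
          + ((B:ℂ) * (-(l:ℂ)^2) + (W:ℂ)) * ((∫ θ in (0:ℝ)..2*π, v t θ * eK l θ) * eK k t)) = 0 := by
        intro t
        have := hsplit t
        linear_combination (eK k t) * this
      have : (∫ t in (0:ℝ)..2*π,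
          ((A:ℂ) * ((∫ θ in (0:ℝ)..2*π, ((utt t θ : ℝ) : ℂ) * eK l θ) * eK k t)
          + ((B:ℂ) * (-(l:ℂ)^2) + (W:ℂ)) * ((∫ θ in (0:ℝ)..2*π, v t θ * eK l θ) * eK k t))) = 0 := by
        rw [intervalIntegral.integral_congr (g := fun _ => (0:ℂ)) (fun t _ => e3 t)]
        simp
      rw [intervalIntegral.integral_add
          (by exact (continuous_const.mul (hIttCont.mul (eK_continuous k))).intervalIntegrable _ _)
          (by exact (continuous_const.mul (hIuCont.mul (eK_continuous k))).intervalIntegrable _ _),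
        intervalIntegral.integral_const_mul, intervalIntegral.integral_const_mul] at this
      exact this
    -- identify J with cI
    have hJ : (∫ t in (0:ℝ)..2*π, (∫ θ in (0:ℝ)..2*π, v t θ * eK l θ) * eK k t)
        = ∫ θ in (0:ℝ)..2*π, (∫ t in (0:ℝ)..2*π, v t θ * eK k t) * eK l θ := by
      calc (∫ t in (0:ℝ)..2*π, (∫ θ in (0:ℝ)..2*π, v t θ * eK l θ) * eK k t)
          = ∫ t in (0:ℝ)..2*π, ∫ θ in (0:ℝ)..2*π, v t θ * eK l θ * eK k t := by
            apply intervalIntegral.integral_congr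
            intro t _
            beta_reduce
            show (∫ θ in (0:ℝ)..2*π, v t θ * eK l θ) * eK k t = _
            rw [← intervalIntegral.integral_mul_const]
        _ = ∫ θ in (0:ℝ)..2*π, ∫ t in (0:ℝ)..2*π, v t θ * eK l θ * eK k t :=
            swapIntegral19 hcont1
        _ = ∫ θ in (0:ℝ)..2*π, (∫ t in (0:ℝ)..2*π, v t θ * eK k t) * eK l θ := by
            apply intervalIntegral.integral_congr
            intro θ _
            beta_reduce
            show (∫ t in (0:ℝ)..2*π, v t θ * eK l θ * eK k t) = _
            rw [← intervalIntegral.integral_mul_const]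
            apply intervalIntegral.integral_congr
            intro t _
            beta_reduce
            show v t θ * eK l θ * eK k t = v t θ * eK k t * eK l θ
            ring
    -- identify K1 using the t-integration by parts
    have hK1 : (∫ t in (0:ℝ)..2*π, (∫ θ in (0:ℝ)..2*π, ((utt t θ : ℝ) : ℂ) * eK l θ) * eK k t)
        = (-(k:ℂ)^2) * ∫ θ in (0:ℝ)..2*π, (∫ t in (0:ℝ)..2*π, v t θ * eK k t) * eK l θ := by
      calc (∫ t in (0:ℝ)..2*π, (∫ θ in (0:ℝ)..2*π, ((utt t θ : ℝ) : ℂ) * eK l θ) * eK k t)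
          = ∫ t in (0:ℝ)..2*π, ∫ θ in (0:ℝ)..2*π, ((utt t θ : ℝ) : ℂ) * eK l θ * eK k t := by
            apply intervalIntegral.integral_congr
            intro t _
            beta_reduce
            show (∫ θ in (0:ℝ)..2*π, ((utt t θ : ℝ) : ℂ) * eK l θ) * eK k t = _
            rw [← intervalIntegral.integral_mul_const]
        _ = ∫ θ in (0:ℝ)..2*π, ∫ t in (0:ℝ)..2*π, ((utt t θ : ℝ) : ℂ) * eK l θ * eK k t :=
            swapIntegral19 hcont2
        _ = ∫ θ in (0:ℝ)..2*π, ((-(k:ℂ)^2) * (∫ t in (0:ℝ)..2*π, v t θ * eK k t)) * eK l θ := by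
            apply intervalIntegral.integral_congr
            intro θ _
            beta_reduce
            show (∫ t in (0:ℝ)..2*π, ((utt t θ : ℝ) : ℂ) * eK l θ * eK k t) = _
            have inner1 : (∫ t in (0:ℝ)..2*π, ((utt t θ : ℝ) : ℂ) * eK l θ * eK k t)
                = (∫ t in (0:ℝ)..2*π, ((utt t θ : ℝ) : ℂ) * eK k t) * eK l θ := by
              rw [← intervalIntegral.integral_mul_const]
              apply intervalIntegral.integral_congr
              intro t _
              beta_reduce
              show ((utt t θ : ℝ) : ℂ) * eK l θ * eK k t = ((utt t θ : ℝ) : ℂ) * eK k t * eK l θ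
              ring
            have inner2 : (∫ t in (0:ℝ)..2*π, ((utt t θ : ℝ) : ℂ) * eK k t)
                = (-(k:ℂ)^2) * (∫ t in (0:ℝ)..2*π, v t θ * eK k t) := by
              calc (∫ t in (0:ℝ)..2*π, ((utt t θ : ℝ) : ℂ) * eK k t)
                  = ∫ t in (0:ℝ)..2*π, ((deriv (deriv (fun x => u x θ)) t : ℝ) : ℂ) * eK k t := by
                    apply intervalIntegral.integral_congr
                    intro t _
                    beta_reduce
                    show ((utt t θ : ℝ) : ℂ) * eK k t = _
                    rw [eqtt]
                _ = (-(k:ℂ)^2) * ∫ t in (0:ℝ)..2*π, ((u t θ : ℝ) : ℂ) * eK k t :=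
                    ibp_real (sec_t θ) (fun t => (hper t θ).1) k
            rw [inner1, inner2]
        _ = (-(k:ℂ)^2) * ∫ θ in (0:ℝ)..2*π, (∫ t in (0:ℝ)..2*π, v t θ * eK k t) * eK l θ := by
            rw [← intervalIntegral.integral_const_mul]
            apply intervalIntegral.integral_congr
            intro θ _
            beta_reduce
            show ((-(k:ℂ)^2) * (∫ t in (0:ℝ)..2*π, v t θ * eK k t)) * eK l θ = _
            ring
    rw [hJ, hK1] at hzero2
    -- the spectral factor is nonzero
    have hre : A * (k:ℝ)^2 + B * (l:ℝ)^2 ≠ W := by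
      rw [hA, hB, hW]
      exact spectral19 hr hT hnot k l
    have hfac : (A:ℂ) * (-(k:ℂ)^2) + ((B:ℂ) * (-(l:ℂ)^2) + (W:ℂ)) ≠ 0 := by
      have hcast : (A:ℂ) * (-(k:ℂ)^2) + ((B:ℂ) * (-(l:ℂ)^2) + (W:ℂ))
          = ((W - (A * (k:ℝ)^2 + B * (l:ℝ)^2) : ℝ) : ℂ) := by
        push_cast
        ring
      rw [hcast]
      rw [Complex.ofReal_ne_zero]
      exact sub_ne_zero.mpr (Ne.symm hre)
    have : ((A:ℂ) * (-(k:ℂ)^2) + ((B:ℂ) * (-(l:ℂ)^2) + (W:ℂ)))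
        * (∫ θ in (0:ℝ)..2*π, (∫ t in (0:ℝ)..2*π, v t θ * eK k t) * eK l θ) = 0 := by
      linear_combination hzero2
    rcases mul_eq_zero.mp this with h | h
    · exact absurd h hfac
    · exact h
  -- step 2 : conclude u = 0 by double Fourier completeness
  have hg : ∀ k : ℤ, ∀ θ, (∫ t in (0:ℝ)..2*π, v t θ * eK k t) = 0 := by
    intro k
    apply fourier_complete (g := fun θ => ∫ t in (0:ℝ)..2*π, v t θ * eK k t)
    · apply intervalIntegral.continuous_parametric_intervalIntegral_of_continuous'
      have : Function.uncurry (fun θ t => v t θ * eK k t)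
          = fun p : ℝ × ℝ => v p.2 p.1 * eK k p.2 := rfl
      rw [this]
      exact (hv_cont.comp (continuous_snd.prodMk continuous_fst)).mul
        ((eK_continuous k).comp continuous_snd)
    · intro θ
      apply intervalIntegral.integral_congr
      intro t _
      beta_reduce
      show v t (θ + 2*π) * eK k t = v t θ * eK k t
      rw [hv]
      simp only []
      rw [(hper t θ).2]
    · exact fun l => hc0 k l
  intro t θ
  have : ∀ x, v x θ = 0 := by
    apply fourier_complete (g := fun x => v x θ)
    · exact hvsec θ
    · intro x
      show v (x + 2*π) θ = v x θ
      rw [hv]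
      simp only []
      rw [(hper x θ).1]
    · exact fun k => hg k θ
  have hvt := this t
  rw [hv] at hvt
  simp only [] at hvt
  exact_mod_cast hvt

/-- the rescaled Jacobi operator
`L = (2π/T)²(1/(1+r²))∂ₜ² + (1/r²)∂_θ² + ϖ`, `ϖ = 1/(r²(1+r²))`, of a Killing
cylinder has a nontrivial `2π`-biperiodic kernel iff `T = 2πmr` for some
positive integer `m` (the bifurcation condition producing Delaunay surfaces). -/
theorem killing_cylinder_bifurcation_kernel
    (r T : ℝ) (hr : 0 < r) (hT : 0 < T) :
    (∃ u : ℝ → ℝ → ℝ,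
      ContDiff ℝ 2 (Function.uncurry u) ∧
      (∀ t θ : ℝ, u (t + 2 * π) θ = u t θ ∧ u t (θ + 2 * π) = u t θ) ∧
      (∃ t θ : ℝ, u t θ ≠ 0) ∧
      (∀ t θ : ℝ,
        (2 * π / T) ^ 2 * (1 / (1 + r ^ 2)) * deriv (deriv (fun x => u x θ)) t
          + (1 / r ^ 2) * deriv (deriv (u t)) θ
          + (1 / (r ^ 2 * (1 + r ^ 2))) * u t θ = 0)) ↔
    (∃ m : ℕ, 1 ≤ m ∧ T = 2 * π * (m : ℝ) * r) := by
  have hπ := Real.pi_pos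
  constructor
  · rintro ⟨u, hu2, hper, ⟨t₀, θ₀, hne⟩, hpde⟩
    by_contra hnot
    exact hne (forward19 r T hr hT u hu2 hper hpde hnot t₀ θ₀)
  · rintro ⟨m, hm1, hm2⟩
    have hm0 : ((m:ℝ)) ≠ 0 := by
      have : (1:ℝ) ≤ (m:ℝ) := by exact_mod_cast hm1
      linarith
    refine ⟨fun t _ => Real.cos ((m:ℝ) * t), ?_, ?_, ?_, ?_⟩
    · have : (Function.uncurry fun t (_ : ℝ) => Real.cos ((m:ℝ) * t))
          = fun p : ℝ × ℝ => Real.cos ((m:ℝ) * p.1) := rfl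
      rw [this]
      exact (Real.contDiff_cos.of_le le_top).comp (contDiff_const.mul contDiff_fst)
    · intro t θ
      constructor
      · show Real.cos ((m:ℝ) * (t + 2*π)) = Real.cos ((m:ℝ) * t)
        rw [show (m:ℝ) * (t + 2*π) = (m:ℝ)*t + (m:ℕ) * (2*π) by ring]
        exact Real.cos_add_nat_mul_two_pi _ m
      · rfl
    · exact ⟨0, 0, by norm_num⟩
    · intro t θ
      -- first derivatives
      have hd1 : ∀ x : ℝ, HasDerivAt (fun y => Real.cos ((m:ℝ) * y))
          (-Real.sin ((m:ℝ) * x) * (m:ℝ)) x := by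
        intro x
        have h1 : HasDerivAt (fun y : ℝ => (m:ℝ) * y) (m:ℝ) x := by
          simpa using (hasDerivAt_id x).const_mul (m:ℝ)
        exact (Real.hasDerivAt_cos ((m:ℝ) * x)).comp x h1
      have hderiv1 : deriv (fun y => Real.cos ((m:ℝ) * y))
          = fun x => -Real.sin ((m:ℝ) * x) * (m:ℝ) := funext fun x => (hd1 x).deriv
      have hd2 : ∀ x : ℝ, HasDerivAt (fun y => -Real.sin ((m:ℝ) * y) * (m:ℝ))
          (-Real.cos ((m:ℝ) * x) * (m:ℝ) * (m:ℝ)) x := by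
        intro x
        have h1 : HasDerivAt (fun y : ℝ => (m:ℝ) * y) (m:ℝ) x := by
          simpa using (hasDerivAt_id x).const_mul (m:ℝ)
        have h2 := ((Real.hasDerivAt_sin ((m:ℝ) * x)).comp x h1).neg.mul_const (m:ℝ)
        simpa [mul_comm, mul_assoc, mul_left_comm] using h2
      have htt : deriv (deriv (fun x => Real.cos ((m:ℝ) * x))) t
          = -Real.cos ((m:ℝ) * t) * (m:ℝ) * (m:ℝ) := by
        rw [hderiv1]
        exact (hd2 t).deriv
      have hθθ : deriv (deriv (fun _ : ℝ => Real.cos ((m:ℝ) * t))) θ = 0 := by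
        have : deriv (fun _ : ℝ => Real.cos ((m:ℝ) * t)) = fun _ => (0:ℝ) :=
          funext fun y => deriv_const y _
        rw [this, deriv_const]
      show (2 * π / T) ^ 2 * (1 / (1 + r ^ 2)) * deriv (deriv (fun x => Real.cos ((m:ℝ) * x))) t
          + (1 / r ^ 2) * deriv (deriv (fun _ : ℝ => Real.cos ((m:ℝ) * t))) θ
          + (1 / (r ^ 2 * (1 + r ^ 2))) * Real.cos ((m:ℝ) * t) = 0
      rw [htt, hθθ, hm2]
      have hπ' : π ≠ 0 := ne_of_gt hπ
      have hr' : r ≠ 0 := ne_of_gt hr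
      field_simp
      ring
end
end
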